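/- For every natural number l and every fixed r' > 0, the function u(t, r) = (4πt)^{−3/2} exp(−(r² + r'²)/(4t)) i_l(r r'/(2t)) satisfies the radial heat equation ∂u/∂t = ∂²u/∂r² + (2/r) ∂u/∂r − (l(l+1)/r²) u for all t > 0 and r > 0; that is, it is annihilated by ∂_t + D_l with V = 0, where D_l = −(1/r²) d/dr (r² d/dr) + l(l+1)/r². -/

import Mathlib

open Real Filter Topology

/-- The operator `f ↦ (z ↦ f′(z)/z)` appearing in Rayleigh's formulas. -/
noncomputable def rayleighOp (f : ℝ → ℝ) : ℝ → ℝ := fun z => deriv f z / z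

/-- Modified spherical Bessel function of the first kind. -/
noncomputable def sphI (l : ℕ) (z : ℝ) : ℝ :=
  z ^ l * (rayleighOp^[l] fun w => Real.sinh w / w) z

/-- `u(t, r) = (4πt)^{-3/2} exp(-(r² + r'²)/(4t)) i_l(r r'/(2t))`. -/
noncomputable def radialKernel (l : ℕ) (r' t r : ℝ) : ℝ :=
  (4 * π * t) ^ (-(3 : ℝ) / 2) *
    Real.exp (-(r ^ 2 + r' ^ 2) / (4 * t)) * sphI l (r * r' / (2 * t))

noncomputable def sphG (l : ℕ) : ℝ → ℝ := rayleighOp^[l] fun w => Real.sinh w / w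

lemma sphG_succ (l : ℕ) : sphG (l + 1) = fun z => deriv (sphG l) z / z := by
  rw [sphG, Function.iterate_succ_apply']; rfl

lemma sphG_contDiffOn (l : ℕ) : ContDiffOn ℝ ⊤ (sphG l) {z : ℝ | z ≠ 0} := by
  induction l with
  | zero => exact Real.contDiff_sinh.contDiffOn.div contDiffOn_id fun x hx => hx
  | succ n ih =>
    rw [sphG_succ]
    exact (ih.deriv_of_isOpen isOpen_ne le_top).div contDiffOn_id fun x hx => hx

lemma sphG_diff (l : ℕ) {z : ℝ} (hz : z ≠ 0) : DifferentiableAt ℝ (sphG l) z :=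
  ((sphG_contDiffOn l).differentiableOn (by simp)).differentiableAt (isOpen_ne.mem_nhds hz)

lemma sphG_deriv_diff (l : ℕ) {z : ℝ} (hz : z ≠ 0) :
    DifferentiableAt ℝ (deriv (sphG l)) z :=
  ((((sphG_contDiffOn l).deriv_of_isOpen isOpen_ne le_top).differentiableOn
    one_ne_zero).differentiableAt (isOpen_ne.mem_nhds hz))

lemma sphG_zero_deriv {z : ℝ} (hz : z ≠ 0) :
    deriv (sphG 0) z = (Real.cosh z * z - Real.sinh z) / z ^ 2 := by
  have h : HasDerivAt (sphG 0) ((Real.cosh z * z - Real.sinh z * 1) / z ^ 2) z :=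
    (Real.hasDerivAt_sinh z).div (hasDerivAt_id z) hz
  simpa using h.deriv

lemma sphG_ode (l : ℕ) : ∀ {z : ℝ}, z ≠ 0 →
    deriv (deriv (sphG l)) z = sphG l z - (2 * ((l : ℝ) + 1) / z) * deriv (sphG l) z := by
  induction l with
  | zero =>
    intro z hz
    have hev : deriv (sphG 0) =ᶠ[𝓝 z]
        fun w => (Real.cosh w * w - Real.sinh w) / w ^ 2 := by
      filter_upwards [eventually_ne_nhds hz] with w hw
      exact sphG_zero_deriv hw
    rw [hev.deriv_eq]
    have h1 : HasDerivAt (fun w => Real.cosh w * w - Real.sinh w)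
        (Real.sinh z * z + Real.cosh z * 1 - Real.cosh z) z :=
      ((Real.hasDerivAt_cosh z).mul (hasDerivAt_id z)).sub (Real.hasDerivAt_sinh z)
    have h2 : HasDerivAt (fun w => (Real.cosh w * w - Real.sinh w) / w ^ 2)
        (((Real.sinh z * z + Real.cosh z * 1 - Real.cosh z) * z ^ 2 -
          (Real.cosh z * z - Real.sinh z) * (2 * z ^ 1)) / (z ^ 2) ^ 2) z :=
      h1.div (hasDerivAt_pow 2 z) (pow_ne_zero 2 hz)
    rw [h2.deriv, sphG_zero_deriv hz]
    show _ = Real.sinh z / z - _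
    field_simp
    ring
  | succ n ih =>
    intro z hz
    have key : ∀ {w : ℝ}, w ≠ 0 → deriv (sphG (n + 1)) w =
        sphG n w / w - (2 * (n : ℝ) + 3) / w ^ 2 * deriv (sphG n) w := by
      intro w hw
      have h1 : HasDerivAt (fun u => deriv (sphG n) u / u)
          ((deriv (deriv (sphG n)) w * w - deriv (sphG n) w * 1) / w ^ 2) w :=
        ((sphG_deriv_diff n hw).hasDerivAt).div (hasDerivAt_id w) hw
      rw [sphG_succ, h1.deriv, ih hw]
      field_simp
      ring
    have hev : deriv (sphG (n + 1)) =ᶠ[𝓝 z]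
        fun w => sphG n w / w - (2 * (n : ℝ) + 3) / w ^ 2 * deriv (sphG n) w := by
      filter_upwards [eventually_ne_nhds hz] with w hw
      exact key hw
    rw [hev.deriv_eq]
    have h2 : HasDerivAt
        (fun w => sphG n w / w - (2 * (n : ℝ) + 3) / w ^ 2 * deriv (sphG n) w)
        ((deriv (sphG n) z * z - sphG n z * 1) / z ^ 2 -
          (((0 : ℝ) * z ^ 2 - (2 * (n : ℝ) + 3) * (2 * z ^ 1)) / (z ^ 2) ^ 2 *
              deriv (sphG n) z +
            (2 * (n : ℝ) + 3) / z ^ 2 * deriv (deriv (sphG n)) z)) z := by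
      exact (((sphG_diff n hz).hasDerivAt).div (hasDerivAt_id z) hz).sub
        ((((hasDerivAt_const z ((2 * (n : ℝ) + 3))).div (hasDerivAt_pow 2 z)
            (pow_ne_zero 2 hz)).mul ((sphG_deriv_diff n hz).hasDerivAt)))
    rw [h2.deriv, ih hz, key hz, sphG_succ]
    beta_reduce
    push_cast
    field_simp
    ring

lemma sphI_hasDerivAt (l : ℕ) {z : ℝ} (hz : z ≠ 0) :
    HasDerivAt (sphI l)
      ((l : ℝ) * z ^ (l - 1) * sphG l z + z ^ l * deriv (sphG l) z) z :=
  (hasDerivAt_pow l z).mul (sphG_diff l hz).hasDerivAt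

lemma sphI_diff (l : ℕ) {z : ℝ} (hz : z ≠ 0) : DifferentiableAt ℝ (sphI l) z :=
  (sphI_hasDerivAt l hz).differentiableAt

lemma sphI_deriv (l : ℕ) {z : ℝ} (hz : z ≠ 0) :
    deriv (sphI l) z = (l : ℝ) * z ^ (l - 1) * sphG l z + z ^ l * deriv (sphG l) z :=
  (sphI_hasDerivAt l hz).deriv

lemma sphI_deriv_diff (l : ℕ) {z : ℝ} (hz : z ≠ 0) :
    DifferentiableAt ℝ (deriv (sphI l)) z := by
  have hev : deriv (sphI l) =ᶠ[𝓝 z]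
      fun w => (l : ℝ) * w ^ (l - 1) * sphG l w + w ^ l * deriv (sphG l) w := by
    filter_upwards [eventually_ne_nhds hz] with w hw
    exact sphI_deriv l hw
  refine (Filter.EventuallyEq.differentiableAt_iff hev).mpr ?_
  exact (((differentiable_pow (l-1)).differentiableAt.const_mul _).mul (sphG_diff l hz)).add
    ((differentiable_pow l).differentiableAt.mul (sphG_deriv_diff l hz))

lemma sphI_ode (l : ℕ) {z : ℝ} (hz : z ≠ 0) :
    deriv (deriv (sphI l)) z =
      sphI l z - (2 / z) * deriv (sphI l) z + ((l : ℝ) * ((l : ℝ) + 1) / z ^ 2) * sphI l z := by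
  have hev : deriv (sphI l) =ᶠ[𝓝 z]
      fun w => (l : ℝ) * w ^ (l - 1) * sphG l w + w ^ l * deriv (sphG l) w := by
    filter_upwards [eventually_ne_nhds hz] with w hw
    exact sphI_deriv l hw
  rw [hev.deriv_eq]
  have h2 : HasDerivAt
      (fun w => (l : ℝ) * w ^ (l - 1) * sphG l w + w ^ l * deriv (sphG l) w)
      ((((l : ℝ) * (((l - 1 : ℕ) : ℝ) * z ^ (l - 1 - 1))) * sphG l z
          + (l : ℝ) * z ^ (l - 1) * deriv (sphG l) z)
        + ((l : ℝ) * z ^ (l - 1) * deriv (sphG l) z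
          + z ^ l * deriv (deriv (sphG l)) z)) z := by
    exact ((((hasDerivAt_pow (l-1) z).const_mul (l : ℝ)).mul
      (sphG_diff l hz).hasDerivAt).add
      ((hasDerivAt_pow l z).mul (sphG_deriv_diff l hz).hasDerivAt))
  rw [h2.deriv, sphG_ode l hz, sphI_deriv l hz]
  show _ = z ^ l * sphG l z - _ + _ * (z ^ l * sphG l z)
  rcases l with _ | _ | n
  · push_cast
    field_simp
    ring
  · push_cast
    field_simp
    ring
  · simp only [Nat.add_sub_cancel]
    push_cast
    field_simp
    ring

/-- The function `u(t,r) = (4πt)^{-3/2} exp(-(r²+r'²)/(4t)) i_l(rr'/(2t))` satisfies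
the radial heat equation `∂u/∂t = ∂²u/∂r² + (2/r) ∂u/∂r - (l(l+1)/r²) u`,
i.e. it is annihilated by `∂_t + D_l` with `V = 0`. -/
theorem radialKernel_heat_equation (l : ℕ) (r' : ℝ) (hr' : 0 < r')
    (t r : ℝ) (ht : 0 < t) (hr : 0 < r) :
    deriv (fun s => radialKernel l r' s r) t =
      deriv (fun ρ => deriv (fun σ => radialKernel l r' t σ) ρ) r
        + (2 / r) * deriv (fun ρ => radialKernel l r' t ρ) r
        - ((l : ℝ) * ((l : ℝ) + 1) / r ^ 2) * radialKernel l r' t r := by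
  have ht4 : (0:ℝ) < 4 * π * t := by positivity
  have hz0 : r * r' / (2 * t) ≠ 0 := by positivity
  -- time derivative
  have hA : HasDerivAt (fun s : ℝ => (4 * π * s) ^ (-(3:ℝ)/2))
      (-3 / (2 * t) * (4 * π * t) ^ (-(3:ℝ)/2)) t := by
    have h1 : HasDerivAt (fun s : ℝ => 4 * π * s) (4 * π) t := by
      simpa using (hasDerivAt_id t).const_mul (4 * π)
    have h2 := (Real.hasDerivAt_rpow_const (x := 4 * π * t) (p := -(3:ℝ)/2)
      (Or.inl ht4.ne')).comp t h1
    refine h2.congr_deriv ?_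
    rw [Real.rpow_sub_one ht4.ne']
    field_simp
  have hB : HasDerivAt (fun s : ℝ => Real.exp (-(r ^ 2 + r' ^ 2) / (4 * s)))
      (Real.exp (-(r ^ 2 + r' ^ 2) / (4 * t)) * ((r ^ 2 + r' ^ 2) / (4 * t ^ 2))) t := by
    have h1 : HasDerivAt (fun s : ℝ => 4 * s) 4 t := by
      simpa using (hasDerivAt_id t).const_mul (4:ℝ)
    have h2 : HasDerivAt (fun s : ℝ => -(r ^ 2 + r' ^ 2) / (4 * s))
        ((0 * (4 * t) - -(r ^ 2 + r' ^ 2) * 4) / (4 * t) ^ 2) t :=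
      (hasDerivAt_const t (-(r ^ 2 + r' ^ 2))).div h1 (by positivity)
    have h3 := h2.exp
    convert h3 using 1
    field_simp
    ring
  have hC : HasDerivAt (fun s : ℝ => sphI l (r * r' / (2 * s)))
      (deriv (sphI l) (r * r' / (2 * t)) * (-(r * r') / (2 * t ^ 2))) t := by
    have h1 : HasDerivAt (fun s : ℝ => 2 * s) 2 t := by
      simpa using (hasDerivAt_id t).const_mul (2:ℝ)
    have h2 : HasDerivAt (fun s : ℝ => r * r' / (2 * s))
        ((0 * (2 * t) - r * r' * 2) / (2 * t) ^ 2) t :=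
      (hasDerivAt_const t (r * r')).div h1 (by positivity)
    have h3 : HasDerivAt (fun s : ℝ => sphI l (r * r' / (2 * s)))
        (deriv (sphI l) (r * r' / (2 * t)) * ((0 * (2 * t) - r * r' * 2) / (2 * t) ^ 2)) t :=
      (((sphI_diff l hz0).hasDerivAt).comp t h2 : HasDerivAt (sphI l ∘ fun s : ℝ => r * r' / (2 * s)) _ t)
    convert h3 using 1
    field_simp
    ring
  have eT : deriv (fun s => radialKernel l r' s r) t =
      (-3 / (2 * t) * (4 * π * t) ^ (-(3:ℝ)/2) * Real.exp (-(r ^ 2 + r' ^ 2) / (4 * t))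
        + (4 * π * t) ^ (-(3:ℝ)/2) *
          (Real.exp (-(r ^ 2 + r' ^ 2) / (4 * t)) * ((r ^ 2 + r' ^ 2) / (4 * t ^ 2))))
        * sphI l (r * r' / (2 * t))
      + (4 * π * t) ^ (-(3:ℝ)/2) * Real.exp (-(r ^ 2 + r' ^ 2) / (4 * t)) *
          (deriv (sphI l) (r * r' / (2 * t)) * (-(r * r') / (2 * t ^ 2))) := by
    have h : HasDerivAt (fun s => radialKernel l r' s r) _ t := (hA.mul hB).mul hC
    exact h.deriv
  -- radial first derivative
  have key : ∀ ρ : ℝ, ρ ≠ 0 → HasDerivAt (fun σ => radialKernel l r' t σ)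
      ((4 * π * t) ^ (-(3:ℝ)/2) * Real.exp (-(ρ ^ 2 + r' ^ 2) / (4 * t)) *
        (-(ρ / (2 * t)) * sphI l (ρ * r' / (2 * t))
          + r' / (2 * t) * deriv (sphI l) (ρ * r' / (2 * t)))) ρ := by
    intro ρ hρ
    have hzρ : ρ * r' / (2 * t) ≠ 0 :=
      div_ne_zero (mul_ne_zero hρ hr'.ne') (by positivity)
    have hE : HasDerivAt (fun σ : ℝ => Real.exp (-(σ ^ 2 + r' ^ 2) / (4 * t)))
        (Real.exp (-(ρ ^ 2 + r' ^ 2) / (4 * t)) * (-(2 * ρ ^ 1 + 0) / (4 * t))) ρ := by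
      have h1 : HasDerivAt (fun σ : ℝ => -(σ ^ 2 + r' ^ 2)) (-(2 * ρ ^ 1 + 0)) ρ :=
        ((hasDerivAt_pow 2 ρ).add (hasDerivAt_const ρ (r' ^ 2))).neg
      exact (h1.div_const (4 * t)).exp
    have hinner : HasDerivAt (fun σ : ℝ => σ * r' / (2 * t)) (1 * r' / (2 * t)) ρ :=
      ((hasDerivAt_id ρ).mul_const r').div_const (2 * t)
    have hI : HasDerivAt (fun σ : ℝ => sphI l (σ * r' / (2 * t)))
        (deriv (sphI l) (ρ * r' / (2 * t)) * (1 * r' / (2 * t))) ρ :=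
      (((sphI_diff l hzρ).hasDerivAt).comp ρ hinner : HasDerivAt (sphI l ∘ fun σ : ℝ => σ * r' / (2 * t)) _ ρ)
    have h : HasDerivAt (fun σ => radialKernel l r' t σ) _ ρ :=
      ((hasDerivAt_const ρ ((4 * π * t) ^ (-(3:ℝ)/2))).mul hE).mul hI
    simp only [Pi.mul_apply] at h
    convert h using 1
    field_simp
    ring
  have hev : deriv (fun σ => radialKernel l r' t σ) =ᶠ[𝓝 r]
      fun ρ => (4 * π * t) ^ (-(3:ℝ)/2) * Real.exp (-(ρ ^ 2 + r' ^ 2) / (4 * t)) *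
        (-(ρ / (2 * t)) * sphI l (ρ * r' / (2 * t))
          + r' / (2 * t) * deriv (sphI l) (ρ * r' / (2 * t))) := by
    filter_upwards [eventually_ne_nhds hr.ne'] with ρ hρ
    exact (key ρ hρ).deriv
  -- second radial derivative
  have hE : HasDerivAt (fun ρ : ℝ => Real.exp (-(ρ ^ 2 + r' ^ 2) / (4 * t)))
      (Real.exp (-(r ^ 2 + r' ^ 2) / (4 * t)) * (-(2 * r ^ 1 + 0) / (4 * t))) r := by
    have h1 : HasDerivAt (fun σ : ℝ => -(σ ^ 2 + r' ^ 2)) (-(2 * r ^ 1 + 0)) r :=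
      ((hasDerivAt_pow 2 r).add (hasDerivAt_const r (r' ^ 2))).neg
    exact (h1.div_const (4 * t)).exp
  have hinner : HasDerivAt (fun σ : ℝ => σ * r' / (2 * t)) (1 * r' / (2 * t)) r :=
    ((hasDerivAt_id r).mul_const r').div_const (2 * t)
  have hIc : HasDerivAt (fun ρ : ℝ => sphI l (ρ * r' / (2 * t)))
      (deriv (sphI l) (r * r' / (2 * t)) * (1 * r' / (2 * t))) r :=
    (((sphI_diff l hz0).hasDerivAt).comp r hinner : HasDerivAt (sphI l ∘ fun σ : ℝ => σ * r' / (2 * t)) _ r)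
  have hIc' : HasDerivAt (fun ρ : ℝ => deriv (sphI l) (ρ * r' / (2 * t)))
      (deriv (deriv (sphI l)) (r * r' / (2 * t)) * (1 * r' / (2 * t))) r :=
    (((sphI_deriv_diff l hz0).hasDerivAt).comp r hinner : HasDerivAt (deriv (sphI l) ∘ fun σ : ℝ => σ * r' / (2 * t)) _ r)
  have hG : HasDerivAt (fun ρ : ℝ => -(ρ / (2 * t)) * sphI l (ρ * r' / (2 * t))
        + r' / (2 * t) * deriv (sphI l) (ρ * r' / (2 * t)))
      ((-(1 / (2 * t)) * sphI l (r * r' / (2 * t))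
        + -(r / (2 * t)) * (deriv (sphI l) (r * r' / (2 * t)) * (1 * r' / (2 * t))))
       + (0 * deriv (sphI l) (r * r' / (2 * t))
        + r' / (2 * t) * (deriv (deriv (sphI l)) (r * r' / (2 * t)) * (1 * r' / (2 * t))))) r := by
    exact ((((hasDerivAt_id r).div_const (2 * t)).neg.mul hIc).add
      ((hasDerivAt_const r (r' / (2 * t))).mul hIc'))
  have hF : HasDerivAt (fun ρ => (4 * π * t) ^ (-(3:ℝ)/2) *
        Real.exp (-(ρ ^ 2 + r' ^ 2) / (4 * t)) *
        (-(ρ / (2 * t)) * sphI l (ρ * r' / (2 * t))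
          + r' / (2 * t) * deriv (sphI l) (ρ * r' / (2 * t)))) _ r :=
    ((hasDerivAt_const r ((4 * π * t) ^ (-(3:ℝ)/2))).mul hE).mul hG
  have eV : radialKernel l r' t r = (4 * π * t) ^ (-(3:ℝ)/2) *
      Real.exp (-(r ^ 2 + r' ^ 2) / (4 * t)) * sphI l (r * r' / (2 * t)) := rfl
  simp only [Pi.mul_apply] at hF
  rw [eT, hev.deriv_eq, hF.deriv, (key r hr.ne').deriv, eV, sphI_ode l hz0]
  field_simp
  ring
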